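/- For a positive odd integer j, a positive integer k with j not dividing 2k, and any real r < 0, (2/π)∫₀^π H(r sin(jx)) sin²(kx) dx = (1/2)·[1 - 1/j + tan(kπ/j)/(kπ)], where H is the Heaviside function. -/

import Mathlib

open Real Finset MeasureTheory intervalIntegral

lemma cos_ne_zero_of_not_dvd (j k : ℕ) (hj : 0 < j) (hdvd : ¬ (j ∣ 2 * k)) :
    Real.cos (k * π / j) ≠ 0 := by
  intro h
  rw [Real.cos_eq_zero_iff] at h
  obtain ⟨n, hn⟩ := h
  have hπ : (0:ℝ) < π := Real.pi_pos
  have hj' : (j:ℝ) ≠ 0 := Nat.cast_ne_zero.2 hj.ne'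
  have h2 : (2 * k : ℝ) = (j:ℝ) * (2 * n + 1) := by
    field_simp at hn
    nlinarith [hn]
  have : (2 * k : ℤ) = (j : ℤ) * (2 * n + 1) := by exact_mod_cast h2
  have hdj : (j:ℤ) ∣ 2 * k := ⟨2 * n + 1, this⟩
  exact hdvd (Int.ofNat_dvd.mp (by exact_mod_cast hdj))

lemma key_sum (j k : ℕ) (hjo : Odd j) (θ : ℝ) (hθ : (j:ℝ) * θ = k * π)
    (hc : Real.cos θ ≠ 0) :
    ∑ n ∈ range j, (-1:ℝ)^n * Real.sin (2 * n * θ) = - Real.tan θ := by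
  set c := Real.cos θ with hcdef
  set H : ℕ → ℝ := fun n => (-1:ℝ)^(n+1) * Real.sin ((2*(n:ℝ) - 1) * θ) / (2*c) with hH
  have step : ∀ n : ℕ, (-1:ℝ)^n * Real.sin (2 * n * θ) = H (n+1) - H n := by
    intro n
    have e1 : ((2*((n:ℝ)+1) - 1) * θ) = 2*n*θ + θ := by ring
    have e2 : ((2*(n:ℝ) - 1) * θ) = 2*n*θ - θ := by ring
    simp only [hH]
    push_cast
    rw [e1, e2, Real.sin_add, Real.sin_sub]
    field_simp
    ring
  calc ∑ n ∈ range j, (-1:ℝ)^n * Real.sin (2 * n * θ)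
      = ∑ n ∈ range j, (H (n+1) - H n) := Finset.sum_congr rfl fun n _ => step n
    _ = H j - H 0 := Finset.sum_range_sub H j
    _ = - Real.tan θ := by
        have hje : Even (j + 1) := Odd.add_one hjo
        have h1 : (-1:ℝ)^(j+1) = 1 := hje.neg_one_pow
        have h2 : Real.sin ((2*(j:ℝ) - 1) * θ) = - Real.sin θ := by
          have : (2*(j:ℝ) - 1) * θ = 2 * ((j:ℝ) * θ) - θ := by ring
          rw [this, hθ, show 2 * ((k:ℝ) * π) - θ = -θ + ((2*k : ℤ) : ℝ) * π by push_cast; ring,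
            Real.sin_add_int_mul_pi]
          rw [show ((-1:ℝ))^((2*k : ℤ)) = 1 by
            rw [show ((2*k:ℤ)) = 2*(k:ℤ) by push_cast; ring, zpow_mul]; norm_num]
          simp
        simp only [hH]
        rw [h1]
        push_cast
        rw [h2]
        simp only [show (2*(0:ℝ) - 1) * θ = -θ by ring, Real.sin_neg]
        rw [Real.tan_eq_sin_div_cos]
        rw [← hcdef]
        field_simp
        ring

lemma alt_sum_id (j : ℕ) (hjo : Odd j) :
    ∑ i ∈ range j, (-1:ℝ)^i * i = ((j:ℝ) - 1)/2 := by
  obtain ⟨m, rfl⟩ := hjo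
  induction m with
  | zero => simp
  | succ n ih =>
    rw [show 2*(n+1)+1 = (2*n+1) + 1 + 1 by ring, Finset.sum_range_succ, Finset.sum_range_succ, ih]
    push_cast
    simp only [pow_succ]
    rw [show ((-1:ℝ))^(2*n) = 1 from Even.neg_one_pow ⟨n, two_mul n⟩]
    ring

lemma hasDeriv_G (k : ℕ) (hk : 0 < k) (x : ℝ) :
    HasDerivAt (fun x : ℝ => x/2 - Real.sin (2*k*x)/(4*k)) (Real.sin (k*x)^2) x := by
  have h1 : HasDerivAt (fun x : ℝ => x/2) (1/2) x :=
    (hasDerivAt_id x).div_const 2 |>.congr_deriv (by norm_num)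
  have h2 : HasDerivAt (fun x : ℝ => Real.sin (2*k*x)) (Real.cos (2*k*x) * (2*k)) x := by
    have := (Real.hasDerivAt_sin (2*k*x)).comp x ((hasDerivAt_id x).const_mul (2*(k:ℝ)))
    simp only [Function.comp_def, mul_one] at this
    convert this using 2 <;> ring
  have h3 := h1.sub ((h2).div_const (4*k))
  convert h3 using 1
  case e'_4 => rfl
  case e'_5 => rfl
  case e'_8 => rfl
  have hk' : (k:ℝ) ≠ 0 := Nat.cast_ne_zero.2 hk.ne'
  have hc : Real.cos (2*(k:ℝ)*x) = Real.cos (k*x)^2 - Real.sin (k*x)^2 := by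
    rw [show 2*(k:ℝ)*x = 2*((k:ℝ)*x) by ring, Real.cos_two_mul']
  have hs := Real.sin_sq_add_cos_sq ((k:ℝ)*x)
  rw [hc]
  field_simp
  nlinarith [hs]

lemma g_intable (j k : ℕ) (a b : ℝ) :
    IntervalIntegrable (fun x => (if Real.sin (j*x) < 0 then (1:ℝ) else 0) * Real.sin (k*x)^2)
      volume a b := by
  have hS : MeasurableSet {x : ℝ | Real.sin (j*x) < 0} :=
    measurableSet_lt (by fun_prop) measurable_const
  have heq : (fun x => (if Real.sin (j*x) < 0 then (1:ℝ) else 0) * Real.sin (k*x)^2)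
      = Set.indicator {x : ℝ | Real.sin (j*x) < 0} (fun x => Real.sin (k*x)^2) := by
    ext x
    by_cases h : Real.sin (j*x) < 0 <;> simp [Set.indicator, h]
  rw [heq, intervalIntegrable_iff]
  exact (((Continuous.intervalIntegrable (by fun_prop) a b).def').indicator hS)

lemma assemble (j : ℕ) (hjo : Odd j) (f : ℕ → ℝ) :
    ∑ i ∈ range j, (1-(-1:ℝ)^i)/2 * (f (i+1) - f i)
      = (∑ i ∈ range j, (-1:ℝ)^i * f i) - f 0 := by
  set T := ∑ i ∈ range j, (-1:ℝ)^i * f i with hT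
  set U := ∑ i ∈ range j, (-1:ℝ)^i * f (i+1) with hU
  have hD : ∑ i ∈ range j, (f (i+1) - f i) = f j - f 0 := Finset.sum_range_sub f j
  have hjodd : (-1:ℝ)^j = -1 := hjo.neg_one_pow
  have h1 : T + (-1:ℝ)^j * f j = -U + f 0 := by
    have := Finset.sum_range_succ' (fun i => (-1:ℝ)^i * f i) j
    rw [Finset.sum_range_succ] at this
    simp only [pow_succ, pow_zero, one_mul] at this
    rw [hT, hU, this, ← Finset.sum_neg_distrib]
    congr 1
    exact Finset.sum_congr rfl fun i _ => by ring
  have hUval : U = f 0 + f j - T := by rw [hjodd] at h1; linarith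
  calc ∑ i ∈ range j, (1-(-1:ℝ)^i)/2 * (f (i+1) - f i)
      = ∑ i ∈ range j, ((f (i+1) - f i)/2 + (-((-1:ℝ)^i * f (i+1))/2 + ((-1:ℝ)^i * f i)/2)) :=
        Finset.sum_congr rfl fun i _ => by ring
    _ = (∑ i ∈ range j, (f (i+1) - f i))/2 + (-U/2 + T/2) := by
        rw [Finset.sum_add_distrib, Finset.sum_add_distrib, ← Finset.sum_div, hU, hT,
          ← Finset.sum_div, ← Finset.sum_div, ← Finset.sum_neg_distrib]
    _ = T - f 0 := by rw [hD, hUval]; ring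

theorem stmt7 (j k : ℕ) (hj : 0 < j) (hjo : Odd j) (hk : 0 < k) (hdvd : ¬ (j ∣ 2 * k))
    (r : ℝ) (hr : r < 0) :
    (2 / π) * ∫ x in (0:ℝ)..π,
        (if 0 < r * Real.sin (j * x) then (1:ℝ) else 0) * Real.sin (k * x) ^ 2
      = (1 / 2) * (1 - 1 / j + Real.tan (k * π / j) / (k * π)) := by
  have hπ : (0:ℝ) < π := Real.pi_pos
  have hj' : (0:ℝ) < j := Nat.cast_pos.2 hj
  have hk' : (0:ℝ) < k := Nat.cast_pos.2 hk
  set g : ℝ → ℝ := fun x => (if Real.sin (j*x) < 0 then (1:ℝ) else 0) * Real.sin (k*x)^2 with hg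
  have hA : ∀ x ∈ Set.uIcc (0:ℝ) π,
      (if 0 < r * Real.sin (j * x) then (1:ℝ) else 0) * Real.sin (k * x) ^ 2 = g x := by
    intro x _
    have : (0 < r * Real.sin (j*x)) ↔ Real.sin (j*x) < 0 := by
      constructor
      · intro h
        by_contra hcon
        push_neg at hcon
        nlinarith
      · intro h
        exact mul_pos_of_neg_of_neg hr h
    simp only [hg, this]
  rw [intervalIntegral.integral_congr hA]
  set a : ℕ → ℝ := fun i => i * π / j with ha
  have ha0 : a 0 = 0 := by simp [ha]
  have haj : a j = π := by simp only [ha]; field_simp [hj'.ne']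
  have hsplit : (∫ x in (0:ℝ)..π, g x) = ∑ i ∈ range j, ∫ x in a i..a (i+1), g x := by
    rw [← ha0, ← haj]
    exact (intervalIntegral.sum_integral_adjacent_intervals
      (fun i _ => g_intable j k (a i) (a (i+1)))).symm
  set G : ℝ → ℝ := fun x => x/2 - Real.sin (2*k*x)/(4*k) with hG
  -- sign of sin(j x) on each subinterval
  have hsign : ∀ i : ℕ, ∀ x : ℝ, Real.sin ((j:ℝ)*x) = (-1:ℝ)^i * Real.sin ((j:ℝ)*x - i*π) := by
    intro i x
    have := Real.sin_add_int_mul_pi ((j:ℝ)*x - i*π) (i:ℤ)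
    rw [show ((j:ℝ)*x - i*π) + ((i:ℤ):ℝ)*π = (j:ℝ)*x by push_cast; ring] at this
    rw [this, zpow_natCast]
  have hale : ∀ i : ℕ, a i ≤ a (i+1) := by
    intro i
    simp only [ha]
    push_cast
    gcongr
    linarith
  have hiv : ∀ i ∈ range j, (∫ x in a i..a (i+1), g x)
      = (1-(-1:ℝ)^i)/2 * (G (a (i+1)) - G (a i)) := by
    intro i _
    rcases Nat.even_or_odd i with hie | hio
    · -- even: integrand vanishes on the closed interval
      have hz : ∀ x ∈ Set.uIcc (a i) (a (i+1)), g x = 0 := by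
        intro x hx
        rw [Set.uIcc_of_le (hale i)] at hx
        have hx1 : (i:ℝ)*π ≤ (j:ℝ)*x := by
          have := hx.1
          simp only [ha] at this
          rw [div_le_iff₀ hj'] at this
          nlinarith
        have hx2 : (j:ℝ)*x ≤ ((i:ℝ)+1)*π := by
          have := hx.2
          simp only [ha] at this
          rw [le_div_iff₀ hj'] at this
          push_cast at this
          nlinarith
        have hnn : 0 ≤ Real.sin ((j:ℝ)*x) := by
          rw [hsign i x, hie.neg_one_pow, one_mul]
          exact Real.sin_nonneg_of_nonneg_of_le_pi (by linarith) (by linarith)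
        simp only [hg, if_neg (not_lt.2 hnn), zero_mul]
      rw [intervalIntegral.integral_congr hz, intervalIntegral.integral_zero,
        hie.neg_one_pow]
      ring
    · -- odd: integrand is sin^2 a.e.
      have hae : ∀ᵐ x ∂volume, x ∈ Set.uIoc (a i) (a (i+1)) → g x = Real.sin ((k:ℝ)*x)^2 := by
        have hsm : volume ({a (i+1)} : Set ℝ) = 0 := measure_singleton _
        filter_upwards [compl_mem_ae_iff.2 hsm] with x hx hmem
        rw [Set.uIoc_of_le (hale i)] at hmem
        have hxlt : x < a (i+1) := lt_of_le_of_ne hmem.2 (by simpa using hx)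
        have hx1 : (i:ℝ)*π < (j:ℝ)*x := by
          have := hmem.1
          simp only [ha] at this
          rw [div_lt_iff₀ hj'] at this
          nlinarith
        have hx2 : (j:ℝ)*x < ((i:ℝ)+1)*π := by
          have := hxlt
          simp only [ha] at this
          rw [lt_div_iff₀ hj'] at this
          push_cast at this
          nlinarith
        have hneg : Real.sin ((j:ℝ)*x) < 0 := by
          rw [hsign i x, hio.neg_one_pow]
          have : 0 < Real.sin ((j:ℝ)*x - i*π) :=
            Real.sin_pos_of_pos_of_lt_pi (by linarith) (by linarith)
          nlinarith
        simp only [hg, if_pos hneg, one_mul]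
      rw [intervalIntegral.integral_congr_ae hae,
        intervalIntegral.integral_eq_sub_of_hasDerivAt
          (fun x _ => hasDeriv_G k hk x)
          ((Continuous.intervalIntegrable (by fun_prop) _ _)),
        hio.neg_one_pow]
      ring
  rw [hsplit, Finset.sum_congr rfl hiv, assemble j hjo (fun n => G (a n))]
  have hG0 : G (a 0) = 0 := by simp [hG, ha0]
  have hGsum : ∑ i ∈ range j, (-1:ℝ)^i * G (a i)
      = (π/(2*j)) * (((j:ℝ)-1)/2) - (1/(4*k)) * (- Real.tan (k*π/j)) := by
    have hterm : ∀ i ∈ range j, (-1:ℝ)^i * G (a i)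
        = (π/(2*j)) * ((-1:ℝ)^i * i) - (1/(4*k)) * ((-1:ℝ)^i * Real.sin (2*i*(k*π/j))) := by
      intro i _
      simp only [hG, ha]
      rw [show 2*(k:ℝ)*((i:ℝ)*π/j) = 2*(i:ℝ)*((k:ℝ)*π/j) by ring]
      field_simp
    rw [Finset.sum_congr rfl hterm, Finset.sum_sub_distrib, ← Finset.mul_sum, ← Finset.mul_sum,
      alt_sum_id j hjo,
      key_sum j k hjo (k*π/j) (by field_simp) (cos_ne_zero_of_not_dvd j k hj hdvd)]
  rw [hGsum, hG0]
  have hc := cos_ne_zero_of_not_dvd j k hj hdvd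
  field_simp
  ring
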